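/- Let G be a graph with acyclic-path closure on AP as above. For any biclosed sets X, Y ⊆ AP, the closure of X ∪ Y is co-closed (hence biclosed). -/

import Mathlib

variable {V : Type*}

/-- A list of vertices is an acyclic path in `G`: it is nonempty, consecutive
vertices are adjacent, and vertices at distance `≥ 2` along the path are
non-adjacent. -/
def IsAcyclicPath (G : SimpleGraph V) (l : List V) : Prop :=
  l ≠ [] ∧ l.Chain' G.Adj ∧
    ∀ (i j : ℕ) (hi : i < l.length) (hj : j < l.length),
      i + 2 ≤ j → ¬ G.Adj (l.get ⟨i, hi⟩) (l.get ⟨j, hj⟩)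

/-- The set of acyclic paths of `G`. -/
def AP (G : SimpleGraph V) : Set (List V) := {l | IsAcyclicPath G l}

/-- A set of paths closed under reversal (paths are considered up to reversal). -/
def RevClosed (X : Set (List V)) : Prop := ∀ l ∈ X, l.reverse ∈ X

/-- A set of acyclic paths closed under concatenation: if `p, p' ∈ X` and
`p ∘ p'` is an acyclic path, then `p ∘ p' ∈ X`. -/
def PathClosed (G : SimpleGraph V) (X : Set (List V)) : Prop :=
  ∀ p ∈ X, ∀ q ∈ X, IsAcyclicPath G (p ++ q) → p ++ q ∈ X

/-- A biclosed set of acyclic paths (invariant under reversal): both `X` and its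
complement in `AP` are closed. -/
def PathBiclosed (G : SimpleGraph V) (X : Set (List V)) : Prop :=
  X ⊆ AP G ∧ RevClosed X ∧ PathClosed G X ∧ PathClosed G (AP G \ X)

/-- The closure of a set of acyclic paths: the smallest closed set containing it. -/
def PathClosure (G : SimpleGraph V) (S : Set (List V)) : Set (List V) :=
  ⋂₀ {T | S ⊆ T ∧ PathClosed G T}

/-- Reversal preserves acyclicity. -/
lemma acyclic_reverse {G : SimpleGraph V} {l : List V} (h : IsAcyclicPath G l) :
    IsAcyclicPath G l.reverse := by
  obtain ⟨hne, hch, hna⟩ := h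
  refine ⟨by simpa using hne, ?_, ?_⟩
  · rw [List.Chain', List.isChain_reverse]
    exact hch.imp fun _ _ hab => hab.symm
  · intro i j hi hj hij hadj
    have hl : l.reverse.length = l.length := l.length_reverse
    simp only [List.get_eq_getElem, List.getElem_reverse] at hadj
    exact hna (l.length - 1 - j) (l.length - 1 - i) (by omega) (by omega) (by omega)
      (by simp only [List.get_eq_getElem]; exact hadj.symm)

/-- Left factor of an acyclic path is acyclic (if nonempty). -/
lemma acyclic_append_left {G : SimpleGraph V} {u v : List V}
    (h : IsAcyclicPath G (u ++ v)) (hu : u ≠ []) : IsAcyclicPath G u := by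
  obtain ⟨_, hch, hna⟩ := h
  refine ⟨hu, (List.isChain_append.mp hch).1, ?_⟩
  intro i j hi hj hij hadj
  refine hna i j (by simp only [List.length_append]; omega)
    (by simp only [List.length_append]; omega) hij ?_
  simp only [List.get_eq_getElem] at hadj ⊢
  rw [List.getElem_append_left hi, List.getElem_append_left hj]
  exact hadj

/-- Right factor of an acyclic path is acyclic (if nonempty). -/
lemma acyclic_append_right {G : SimpleGraph V} {u v : List V}
    (h : IsAcyclicPath G (u ++ v)) (hv : v ≠ []) : IsAcyclicPath G v := by
  obtain ⟨_, hch, hna⟩ := h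
  refine ⟨hv, (List.isChain_append.mp hch).2.1, ?_⟩
  intro i j hi hj hij hadj
  refine hna (u.length + i) (u.length + j) (by simp only [List.length_append]; omega)
    (by simp only [List.length_append]; omega) (by omega) ?_
  simp only [List.get_eq_getElem] at hadj ⊢
  rw [List.getElem_append_right (by omega), List.getElem_append_right (by omega)]
  simpa using hadj

/-- Inductive description of the path closure. -/
inductive Gen (G : SimpleGraph V) (S : Set (List V)) : List V → Prop
  | base {l : List V} : l ∈ S → Gen G S l
  | app {p q : List V} : Gen G S p → Gen G S q → IsAcyclicPath G (p ++ q) → Gen G S (p ++ q)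

lemma pathClosure_eq (G : SimpleGraph V) (S : Set (List V)) :
    PathClosure G S = {l | Gen G S l} := by
  apply Set.Subset.antisymm
  · exact Set.sInter_subset_of_mem
      ⟨fun l hl => Gen.base hl, fun p hp q hq hac => Gen.app hp hq hac⟩
  · intro l hl
    rw [PathClosure, Set.mem_sInter]
    rintro T ⟨hST, hT⟩
    induction hl with
    | base h => exact hST h
    | app hp hq hac ihp ihq => exact hT _ ihp _ ihq hac

lemma gen_ap {G : SimpleGraph V} {S : Set (List V)} (hS : S ⊆ AP G)
    {l : List V} (h : Gen G S l) : IsAcyclicPath G l := by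
  induction h with
  | base h => exact hS h
  | app _ _ hac _ _ => exact hac

lemma gen_reverse {G : SimpleGraph V} {S : Set (List V)} (hS : RevClosed S)
    {l : List V} (h : Gen G S l) : Gen G S l.reverse := by
  induction h with
  | base h => exact Gen.base (hS _ h)
  | app hp hq hac ihp ihq =>
      rw [List.reverse_append]
      exact Gen.app ihq ihp (by rw [← List.reverse_append]; exact acyclic_reverse hac)

/-- Key lemma: any acyclic splitting of an element of the closure of `X ∪ Y`
has (at least) one factor in the closure. -/
lemma key {G : SimpleGraph V} {X Y : Set (List V)} (hX : PathBiclosed G X)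
    (hY : PathBiclosed G Y) {r : List V} (hr : Gen G (X ∪ Y) r) :
    ∀ p q : List V, r = p ++ q → IsAcyclicPath G p → IsAcyclicPath G q →
      Gen G (X ∪ Y) p ∨ Gen G (X ∪ Y) q := by
  have hsub : X ∪ Y ⊆ AP G := Set.union_subset hX.1 hY.1
  induction hr with
  | @base l h =>
    intro p q heq hp hq
    subst heq
    by_contra hc
    push_neg at hc
    obtain ⟨hcp, hcq⟩ := hc
    have hpX : p ∉ X := fun h => hcp (Gen.base (Or.inl h))
    have hqX : q ∉ X := fun h => hcq (Gen.base (Or.inl h))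
    have hpY : p ∉ Y := fun h => hcp (Gen.base (Or.inr h))
    have hqY : q ∉ Y := fun h => hcq (Gen.base (Or.inr h))
    rcases h with h | h
    · exact (hX.2.2.2 p ⟨hp, hpX⟩ q ⟨hq, hqX⟩ (hX.1 h)).2 h
    · exact (hY.2.2.2 p ⟨hp, hpY⟩ q ⟨hq, hqY⟩ (hY.1 h)).2 h
  | @app a b ha hb hac iha ihb =>
    intro p q heq hp hq
    rcases List.append_eq_append_iff.mp heq with ⟨m, hm1, hm2⟩ | ⟨m, hm1, hm2⟩
    · -- p = a ++ m, b = m ++ q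
      rcases eq_or_ne m [] with rfl | hm
      · simp only [List.append_nil] at hm1
        subst hm1
        exact Or.inl ha
      · rcases ihb m q hm2 (acyclic_append_right (hm1 ▸ hp) hm) hq with h | h
        · left; rw [hm1]; exact Gen.app ha h (hm1 ▸ hp)
        · exact Or.inr h
    · -- a = p ++ m, q = m ++ b
      rcases eq_or_ne m [] with rfl | hm
      · simp only [List.append_nil] at hm1
        subst hm1
        exact Or.inl ha
      · rcases iha p m hm1 hp (acyclic_append_right (hm1 ▸ gen_ap hsub ha) hm) with h | h
        · exact Or.inl h
        · right; rw [hm2]; exact Gen.app h hb (hm2 ▸ hq)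

/-- For biclosed sets `X, Y` of acyclic paths, the closure of
`X ∪ Y` is co-closed, hence biclosed. -/
theorem stmt11 [Fintype V] (G : SimpleGraph V)
    (X Y : Set (List V)) (hX : PathBiclosed G X) (hY : PathBiclosed G Y) :
    PathClosed G (AP G \ PathClosure G (X ∪ Y)) ∧
    PathBiclosed G (PathClosure G (X ∪ Y)) := by
  have hsub : X ∪ Y ⊆ AP G := Set.union_subset hX.1 hY.1
  have hrev : RevClosed (X ∪ Y) := fun l hl =>
    hl.elim (fun h => Or.inl (hX.2.1 l h)) (fun h => Or.inr (hY.2.1 l h))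
  rw [pathClosure_eq]
  have hco : PathClosed G (AP G \ {l | Gen G (X ∪ Y) l}) := by
    rintro p ⟨hpAP, hpC⟩ q ⟨hqAP, hqC⟩ hac
    refine ⟨hac, fun hmem => ?_⟩
    rcases key hX hY hmem p q rfl hpAP hqAP with h | h
    exacts [hpC h, hqC h]
  exact ⟨hco, fun l hl => gen_ap hsub hl, fun l hl => gen_reverse hrev hl,
    fun p hp q hq hac => Gen.app hp hq hac, hco⟩
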